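/- Let 𝒩 be an ideal of subsets of Ω (∅ ∈ 𝒩; B ⊆ A ∈ 𝒩 implies B ∈ 𝒩; A, B ∈ 𝒩 implies A ∪ B ∈ 𝒩) with Ω ∉ 𝒩, and let A ⊆ Ω with A ∉ 𝒩. Then there exists a finitely additive probability μ on all subsets of Ω, i.e. a function μ : 𝒫(Ω) → [0, 1] with μ(∅) = 0, μ(Ω) = 1 and μ(B ∪ C) = μ(B) + μ(C) for all disjoint B, C ⊆ Ω, such that μ(N) = 0 for every N ∈ 𝒩 and μ(A) = 1. -/
import Mathlib


/-- Given an ideal `𝒩` of subsets of `Ω` with `Ω ∉ 𝒩` and a set `A ∉ 𝒩`, there is a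
finitely additive probability `μ` on all subsets of `Ω` vanishing on `𝒩` and with
`μ(A) = 1`. -/
theorem stmt_18 {Ω : Type*} [Nonempty Ω] (N : Set (Set Ω))
    (hempty : ∅ ∈ N)
    (hdown : ∀ A ∈ N, ∀ B, B ⊆ A → B ∈ N)
    (hunion : ∀ A ∈ N, ∀ B ∈ N, A ∪ B ∈ N)
    (huniv : Set.univ ∉ N)
    (A : Set Ω) (hA : A ∉ N) :
    ∃ μ : Set Ω → ℝ,
      μ ∅ = 0 ∧ μ Set.univ = 1 ∧
      (∀ B, 0 ≤ μ B ∧ μ B ≤ 1) ∧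
      (∀ B C : Set Ω, Disjoint B C → μ (B ∪ C) = μ B + μ C) ∧
      (∀ B ∈ N, μ B = 0) ∧
      μ A = 1 := by
  classical
  -- The filter of sets containing A up to a null set
  let F : Filter Ω :=
    { sets := {S | A \ S ∈ N}
      univ_sets := by simpa using hempty
      sets_of_superset := by
        intro S T hS hST
        exact hdown _ hS _ (Set.diff_subset_diff_right hST)
      inter_sets := by
        intro S T hS hT
        have : A \ (S ∩ T) ⊆ (A \ S) ∪ (A \ T) := by
          intro x hx
          by_cases h : x ∈ S
          · exact Or.inr ⟨hx.1, fun h2 => hx.2 ⟨h, h2⟩⟩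
          · exact Or.inl ⟨hx.1, h⟩
        exact hdown _ (hunion _ hS _ hT) _ this }
  have hFne : F.NeBot := by
    rw [Filter.neBot_iff]
    intro h
    have h0 : (∅ : Set Ω) ∈ F := by rw [h]; exact Filter.mem_bot
    have : A \ (∅ : Set Ω) ∈ N := h0
    simp at this
    exact hA this
  let U := Ultrafilter.of F
  have hle : ∀ S ∈ F, S ∈ U := fun S hS => Filter.le_def.mp (Ultrafilter.of_le F) S hS
  have hnotboth : ∀ B C : Set Ω, Disjoint B C → B ∈ U → C ∈ U → False := by
    intro B C hBC hB hC
    have : B ∩ C ∈ U := Filter.inter_mem hB hC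
    rw [Set.disjoint_iff_inter_eq_empty.mp hBC] at this
    exact Filter.empty_notMem (U : Filter Ω) this
  refine ⟨fun S => if S ∈ U then 1 else 0, ?_, ?_, ?_, ?_, ?_, ?_⟩
  · simp [Filter.empty_notMem (U : Filter Ω)]
  · exact if_pos Filter.univ_mem
  · intro B; by_cases h : B ∈ U <;> simp [h]
  · intro B C hBC
    have hun : B ∪ C ∈ U ↔ B ∈ U ∨ C ∈ U := Ultrafilter.union_mem_iff
    by_cases hB : B ∈ U <;> by_cases hC : C ∈ U
    · exact absurd hC (fun h => hnotboth B C hBC hB h)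
    · simp [hB, hC, hun.mpr (Or.inl hB)]
    · simp [hB, hC, hun.mpr (Or.inr hC)]
    · have : B ∪ C ∉ U := fun h => (hun.mp h).elim hB hC
      simp [hB, hC, this]
  · intro B hB
    have hBc : Bᶜ ∈ F := by
      show A \ Bᶜ ∈ N
      exact hdown _ hB _ (fun x hx => not_not.mp hx.2)
    have : B ∉ U := fun h => hnotboth B Bᶜ disjoint_compl_right h (hle _ hBc)
    simp [this]
  · have : A ∈ F := by show A \ A ∈ N; simpa using hempty
    simp [hle _ this]
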